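/- Let d ≥ 1. For y = (y₀, y₁) ∈ {0,…,d−1}², let ρ_{y₀y₁} be arbitrary d×d complex density matrices, and let (A_j)_{j=0}^{d−1} and (B_j)_{j=0}^{d−1} be two families of d×d diagonal positive semidefinite matrices with Σ_{j=0}^{d−1} A_j = 𝟙 and Σ_{j=0}^{d−1} B_j = 𝟙 (incoherent d-outcome measurements). Then W_{C,d} := Σ_{y₀=0}^{d−1} Σ_{y₁=0}^{d−1} [ Re Tr(A_{y₀} ρ_{y₀y₁}) + Re Tr(B_{y₁} ρ_{y₀y₁}) ] ≤ d² + d. -/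

import Mathlib

open Matrix Complex
open scoped ComplexOrder

lemma psd_diag_nonneg {d : ℕ} {A : Matrix (Fin d) (Fin d) ℂ} (hA : A.PosSemidef) (i : Fin d) :
    0 ≤ A i i := by
  exact hA.diag_nonneg

lemma trace_diag_mul {d : ℕ} (A ρ : Matrix (Fin d) (Fin d) ℂ) (hA : A.IsDiag) :
    (A * ρ).trace = ∑ i, A i i * ρ i i := by
  rw [Matrix.trace]
  refine Finset.sum_congr rfl fun i _ => ?_
  simp only [Matrix.diag, Matrix.mul_apply]
  rw [Finset.sum_eq_single i (fun k _ hk => by rw [hA hk.symm, zero_mul]) (by simp)]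


/-- Incoherent bound `β_{C,d} = d² + d` for the coherence witness in dimension `d`:
for arbitrary density matrices `ρ_{y₀y₁}` and two incoherent (diagonal) `d`-outcome
measurements `(A_j)` and `(B_j)` with `∑ A_j = 𝟙 = ∑ B_j`, we have
`W_{C,d} = ∑_{y₀,y₁} [Re Tr(A_{y₀} ρ_{y₀y₁}) + Re Tr(B_{y₁} ρ_{y₀y₁})] ≤ d² + d`. -/
theorem stmt_8 (d : ℕ) (hd : 1 ≤ d)
    (ρ : Fin d → Fin d → Matrix (Fin d) (Fin d) ℂ)
    (hρpsd : ∀ y₀ y₁, (ρ y₀ y₁).PosSemidef) (hρtr : ∀ y₀ y₁, (ρ y₀ y₁).trace = 1)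
    (A B : Fin d → Matrix (Fin d) (Fin d) ℂ)
    (hApsd : ∀ j, (A j).PosSemidef) (hAdiag : ∀ j, (A j).IsDiag)
    (hBpsd : ∀ j, (B j).PosSemidef) (hBdiag : ∀ j, (B j).IsDiag)
    (hAsum : ∑ j, A j = 1) (hBsum : ∑ j, B j = 1) :
    ∑ y₀ : Fin d, ∑ y₁ : Fin d,
        (((A y₀ * ρ y₀ y₁).trace).re + ((B y₁ * ρ y₀ y₁).trace).re)
      ≤ (d : ℝ) ^ 2 + d := by
  -- nonnegativity / realness of diagonal entries
  have hAre : ∀ j i, 0 ≤ (A j i i).re ∧ (A j i i).im = 0 := fun j i => by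
    have h := psd_diag_nonneg (hApsd j) i
    rw [Complex.nonneg_iff] at h
    exact ⟨h.1, h.2.symm⟩
  have hBre : ∀ j i, 0 ≤ (B j i i).re ∧ (B j i i).im = 0 := fun j i => by
    have h := psd_diag_nonneg (hBpsd j) i
    rw [Complex.nonneg_iff] at h
    exact ⟨h.1, h.2.symm⟩
  have hρre : ∀ y₀ y₁ i, 0 ≤ (ρ y₀ y₁ i i).re ∧ (ρ y₀ y₁ i i).im = 0 := fun y₀ y₁ i => by
    have h := psd_diag_nonneg (hρpsd y₀ y₁) i
    rw [Complex.nonneg_iff] at h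
    exact ⟨h.1, h.2.symm⟩
  -- column sums of A, B are 1
  have hAcol : ∀ i, ∑ j, (A j i i).re = 1 := by
    intro i
    have h : (∑ j, A j) i i = (1 : Matrix (Fin d) (Fin d) ℂ) i i := by rw [hAsum]
    rw [Matrix.sum_apply] at h
    have h' : ∑ j, A j i i = 1 := by simpa [Matrix.one_apply] using h
    have := congrArg Complex.re h'
    simpa [Complex.re_sum] using this
  have hBcol : ∀ i, ∑ j, (B j i i).re = 1 := by
    intro i
    have h : (∑ j, B j) i i = (1 : Matrix (Fin d) (Fin d) ℂ) i i := by rw [hBsum]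
    rw [Matrix.sum_apply] at h
    have h' : ∑ j, B j i i = 1 := by simpa [Matrix.one_apply] using h
    have := congrArg Complex.re h'
    simpa [Complex.re_sum] using this
  -- trace of ρ gives diagonal sum 1
  have hρsum : ∀ y₀ y₁, ∑ i, (ρ y₀ y₁ i i).re = 1 := by
    intro y₀ y₁
    have := congrArg Complex.re (hρtr y₀ y₁)
    simpa [Matrix.trace, Matrix.diag, Complex.re_sum] using this
  -- entrywise upper bounds
  have hA1 : ∀ j i, (A j i i).re ≤ 1 := fun j i => by
    rw [← hAcol i]
    exact Finset.single_le_sum (fun k _ => (hAre k i).1) (Finset.mem_univ j)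
  have hB1 : ∀ j i, (B j i i).re ≤ 1 := fun j i => by
    rw [← hBcol i]
    exact Finset.single_le_sum (fun k _ => (hBre k i).1) (Finset.mem_univ j)
  have hρ1 : ∀ y₀ y₁ i, (ρ y₀ y₁ i i).re ≤ 1 := fun y₀ y₁ i => by
    rw [← hρsum y₀ y₁]
    exact Finset.single_le_sum (fun k _ => (hρre y₀ y₁ k).1) (Finset.mem_univ i)
  -- real trace formulas
  have htrA : ∀ y₀ y₁, ((A y₀ * ρ y₀ y₁).trace).re
      = ∑ i, (A y₀ i i).re * (ρ y₀ y₁ i i).re := by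
    intro y₀ y₁
    rw [trace_diag_mul _ _ (hAdiag y₀), Complex.re_sum]
    refine Finset.sum_congr rfl fun i _ => ?_
    rw [Complex.mul_re, (hAre y₀ i).2, (hρre y₀ y₁ i).2]
    ring
  have htrB : ∀ y₀ y₁, ((B y₁ * ρ y₀ y₁).trace).re
      = ∑ i, (B y₁ i i).re * (ρ y₀ y₁ i i).re := by
    intro y₀ y₁
    rw [trace_diag_mul _ _ (hBdiag y₁), Complex.re_sum]
    refine Finset.sum_congr rfl fun i _ => ?_
    rw [Complex.mul_re, (hBre y₁ i).2, (hρre y₀ y₁ i).2]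
    ring
  -- key per-pair bound
  have key : ∀ y₀ y₁, ((A y₀ * ρ y₀ y₁).trace).re + ((B y₁ * ρ y₀ y₁).trace).re
      ≤ 1 + ∑ i, (A y₀ i i).re * (B y₁ i i).re := by
    intro y₀ y₁
    rw [htrA, htrB, ← Finset.sum_add_distrib]
    have : ∑ i, ((A y₀ i i).re * (ρ y₀ y₁ i i).re + (B y₁ i i).re * (ρ y₀ y₁ i i).re)
        ≤ ∑ i, ((ρ y₀ y₁ i i).re + (A y₀ i i).re * (B y₁ i i).re) := by
      refine Finset.sum_le_sum fun i _ => ?_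
      nlinarith [mul_nonneg (mul_nonneg (sub_nonneg.2 (hA1 y₀ i)) (sub_nonneg.2 (hB1 y₁ i)))
          (hρre y₀ y₁ i).1,
        mul_nonneg (mul_nonneg (hAre y₀ i).1 (hBre y₁ i).1) (sub_nonneg.2 (hρ1 y₀ y₁ i))]
    calc _ ≤ ∑ i, ((ρ y₀ y₁ i i).re + (A y₀ i i).re * (B y₁ i i).re) := this
      _ = 1 + ∑ i, (A y₀ i i).re * (B y₁ i i).re := by
          rw [Finset.sum_add_distrib, hρsum]
  calc ∑ y₀ : Fin d, ∑ y₁ : Fin d,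
        (((A y₀ * ρ y₀ y₁).trace).re + ((B y₁ * ρ y₀ y₁).trace).re)
      ≤ ∑ y₀ : Fin d, ∑ y₁ : Fin d, (1 + ∑ i, (A y₀ i i).re * (B y₁ i i).re) :=
        Finset.sum_le_sum fun y₀ _ => Finset.sum_le_sum fun y₁ _ => key y₀ y₁
    _ = (d : ℝ) ^ 2 + d := by
        have hinner : ∀ y₀ : Fin d, ∑ y₁ : Fin d, ∑ i, (A y₀ i i).re * (B y₁ i i).re
            = ∑ i, (A y₀ i i).re := by
          intro y₀
          rw [Finset.sum_comm]
          refine Finset.sum_congr rfl fun i _ => ?_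
          rw [← Finset.mul_sum, hBcol, mul_one]
        have houter : ∑ y₀ : Fin d, ∑ i, (A y₀ i i).re = d := by
          rw [Finset.sum_comm]
          simp [hAcol]
        simp only [Finset.sum_add_distrib, Finset.sum_const, Finset.card_univ,
          Fintype.card_fin, nsmul_eq_mul, mul_one]
        rw [Finset.sum_congr rfl fun y₀ _ => hinner y₀, houter]
        push_cast
        ring
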